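/- arXiv:1906.09134 — 2 statements merged into one kernel-verified Lean document; each statement's English description precedes it below -/
import Mathlib

section
/- Let t₁ < t₂, c₁ > 0, c₂ ≥ 0, and let u⁽¹⁾, u⁽²⁾ ∈ ℝᵐ with ‖u⁽²⁾‖_R > ‖u⁽¹⁾‖_R, where ‖u‖²_R = uᵀRu for a symmetric positive definite matrix R, and let |||·||| be any norm on ℝᵐ. For α ∈ (0,1) sufficiently close to 1, define β by β = t₁/(t₁ − (1−α)t₂) (equivalently β − 1 = (1−α)(t₂−t₁)/(t₁−(1−α)t₂)). Then (t₁/β)(β²c₁‖u⁽¹⁾‖²_R + βc₂|||u⁽¹⁾|||) + ((t₂−t₁)/α)(α²c₁‖u⁽²⁾‖²_R + αc₂|||u⁽²⁾|||) < t₁(c₁‖u⁽¹⁾‖²_R + c₂|||u⁽¹⁾|||) + (t₂−t₁)(c₁‖u⁽²⁾‖²_R + c₂|||u⁽²⁾|||). -/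
open Matrix

/-- Cost comparison: slowing down the high-effort segment and speeding up the low-effort
segment strictly reduces the total cost, for `α ∈ (0,1)` sufficiently close to `1`.
Here `β` is defined via `β − 1 = (1−α)(t₂−t₁)/(t₁−(1−α)t₂)`, `‖u‖²_R = u ⬝ᵥ R.mulVec u`, and
`N` is the additional (norm) term in the stage cost. -/
theorem stmt_10 {m : ℕ} (t₁ t₂ c₁ c₂ : ℝ) (ht₁ : 0 < t₁) (ht : t₁ < t₂)
    (hc₁ : 0 < c₁) (hc₂ : 0 ≤ c₂)
    (R : Matrix (Fin m) (Fin m) ℝ) (hR : R.PosDef)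
    (N : (Fin m → ℝ) → ℝ)
    (u₁ u₂ : Fin m → ℝ)
    (hu : u₁ ⬝ᵥ R.mulVec u₁ < u₂ ⬝ᵥ R.mulVec u₂) :
    ∃ α₀ ∈ Set.Ioo (0 : ℝ) 1, ∀ α ∈ Set.Ioo α₀ 1,
      (t₁ / (1 + (1 - α) * (t₂ - t₁) / (t₁ - (1 - α) * t₂))) *
          ((1 + (1 - α) * (t₂ - t₁) / (t₁ - (1 - α) * t₂)) ^ 2 * c₁ * (u₁ ⬝ᵥ R.mulVec u₁) +
            (1 + (1 - α) * (t₂ - t₁) / (t₁ - (1 - α) * t₂)) * c₂ * N u₁) +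
        ((t₂ - t₁) / α) * (α ^ 2 * c₁ * (u₂ ⬝ᵥ R.mulVec u₂) + α * c₂ * N u₂) <
      t₁ * (c₁ * (u₁ ⬝ᵥ R.mulVec u₁) + c₂ * N u₁) +
        (t₂ - t₁) * (c₁ * (u₂ ⬝ᵥ R.mulVec u₂) + c₂ * N u₂) := by
  set Q₁ := u₁ ⬝ᵥ R.mulVec u₁ with hQ₁def
  set Q₂ := u₂ ⬝ᵥ R.mulVec u₂ with hQ₂def
  have hQ₁ : 0 ≤ Q₁ := by
    rcases eq_or_ne u₁ 0 with h | h
    · simp [hQ₁def, h]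
    · exact le_of_lt (by simpa using hR.dotProduct_mulVec_pos h)
  have hQ₂ : 0 < Q₂ := lt_of_le_of_lt hQ₁ hu
  have ht₂ : 0 < t₂ := ht₁.trans ht
  have htt : (0:ℝ) < t₂ - t₁ := by linarith
  set ε : ℝ := t₁ * (Q₂ - Q₁) / (t₂ * Q₂) with hεdef
  have hε : 0 < ε :=
    div_pos (mul_pos ht₁ (by linarith)) (mul_pos ht₂ hQ₂)
  refine ⟨max (1 - ε) (1/2), ⟨lt_of_lt_of_le (by norm_num) (le_max_right _ _),
    max_lt (by linarith) (by norm_num)⟩, ?_⟩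
  rintro α ⟨hα1, hα2⟩
  have hαpos : 0 < α := lt_trans (by norm_num) (lt_of_le_of_lt (le_max_right _ _) hα1)
  have h1α : (0:ℝ) < 1 - α := by linarith
  have hαε : 1 - α < ε := by
    have := lt_of_le_of_lt (le_max_left (1 - ε) (1/2)) hα1
    linarith
  -- key inequality: (1-α) t₂ Q₂ < t₁ (Q₂ - Q₁)
  have key : (1 - α) * (t₂ * Q₂) < t₁ * (Q₂ - Q₁) := by
    have h1 : (1 - α) * (t₂ * Q₂) < ε * (t₂ * Q₂) :=
      mul_lt_mul_of_pos_right hαε (mul_pos ht₂ hQ₂)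
    have h2 : ε * (t₂ * Q₂) = t₁ * (Q₂ - Q₁) := by
      rw [hεdef]; field_simp
    linarith
  have hd : 0 < t₁ - (1 - α) * t₂ := by nlinarith
  have hkey2 : t₁ * Q₁ < (t₁ - (1 - α) * t₂) * Q₂ := by nlinarith
  have hβeq : 1 + (1 - α) * (t₂ - t₁) / (t₁ - (1 - α) * t₂)
      = α * t₁ / (t₁ - (1 - α) * t₂) := by
    field_simp
    ring
  rw [hβeq]
  have e1 : t₁ / (α * t₁ / (t₁ - (1 - α) * t₂)) *
      ((α * t₁ / (t₁ - (1 - α) * t₂)) ^ 2 * c₁ * Q₁ +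
        (α * t₁ / (t₁ - (1 - α) * t₂)) * c₂ * N u₁)
      = (α * t₁ / (t₁ - (1 - α) * t₂)) * (t₁ * c₁ * Q₁) + t₁ * (c₂ * N u₁) := by
    field_simp
  have e2 : (t₂ - t₁) / α * (α ^ 2 * c₁ * Q₂ + α * c₂ * N u₂)
      = α * ((t₂ - t₁) * c₁ * Q₂) + (t₂ - t₁) * (c₂ * N u₂) := by
    field_simp
  rw [e1, e2]
  have main : (α * t₁ / (t₁ - (1 - α) * t₂)) * (t₁ * c₁ * Q₁) + α * ((t₂ - t₁) * c₁ * Q₂)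
      < t₁ * (c₁ * Q₁) + (t₂ - t₁) * (c₁ * Q₂) := by
    rw [div_mul_eq_mul_div, div_add' _ _ _ hd.ne', div_lt_iff₀ hd]
    nlinarith [mul_pos hc₁ (mul_pos (mul_pos h1α htt) (sub_pos.mpr hkey2))]
  linarith [main]
end

section
/- For the mobile robot ẋ₁ = u₁cos x₃, ẋ₂ = u₁sin x₃, ẋ₃ = u₂ with available constant control values (0,0), (ū₁,0), (0,ū₂) with ū₁ > 0, ū₂ > 0: for every initial state x̂ ∈ ℝ³ there exist a time T > 0 and a piecewise-constant control u: [0,T] → {(0,0),(ū₁,0),(0,ū₂)} with at most three pieces (turn–move–turn) such that the resulting solution satisfies x(T) = (0,0,0). -/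
open Real

/-- Turn–move–turn controllability of the mobile robot: from any initial state there is a
piecewise-constant control with at most three pieces, taking values in
`{(0,0), (ū₁,0), (0,ū₂)}`, steering the system to the origin (the heading angle being taken
modulo `2π`, i.e. `x₃(T) = 2πk` for some integer `k`). -/
theorem stmt_19 (ub₁ ub₂ : ℝ) (hub₁ : 0 < ub₁) (hub₂ : 0 < ub₂) (xh₁ xh₂ xh₃ : ℝ) :
    ∃ (T : ℝ), 0 < T ∧
    ∃ (s₁ s₂ : ℝ), 0 ≤ s₁ ∧ s₁ ≤ s₂ ∧ s₂ ≤ T ∧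
    ∃ (u : ℝ → ℝ × ℝ) (x₁ x₂ x₃ : ℝ → ℝ),
      (∀ t, u t ∈ ({((0 : ℝ), (0 : ℝ)), (ub₁, 0), (0, ub₂)} : Set (ℝ × ℝ))) ∧
      (∀ t ∈ Set.Ico (0 : ℝ) s₁, u t = (0, ub₂)) ∧
      (∀ t ∈ Set.Ico s₁ s₂, u t = (ub₁, 0)) ∧
      (∀ t ∈ Set.Icc s₂ T, u t = (0, ub₂)) ∧
      Continuous x₁ ∧ Continuous x₂ ∧ Continuous x₃ ∧
      (∀ t ∈ Set.Ioo (0 : ℝ) T, t ≠ s₁ → t ≠ s₂ →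
        HasDerivAt x₁ ((u t).1 * Real.cos (x₃ t)) t ∧
        HasDerivAt x₂ ((u t).1 * Real.sin (x₃ t)) t ∧
        HasDerivAt x₃ ((u t).2) t) ∧
      x₁ 0 = xh₁ ∧ x₂ 0 = xh₂ ∧ x₃ 0 = xh₃ ∧
      x₁ T = 0 ∧ x₂ T = 0 ∧ (∃ k : ℤ, x₃ T = 2 * π * k) := by
  have hπ : (0:ℝ) < 2 * π := by positivity
  set z : ℂ := ⟨-xh₁, -xh₂⟩ with hz_def
  set r : ℝ := ‖z‖ with hr_def
  have hr0 : 0 ≤ r := norm_nonneg z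
  set φ : ℝ := Complex.arg z with hφ_def
  have hcos : r * Real.cos φ = -xh₁ := Complex.norm_mul_cos_arg z
  have hsin : r * Real.sin φ = -xh₂ := Complex.norm_mul_sin_arg z
  set m : ℤ := ⌊(φ - xh₃) / (2 * π)⌋ with hm_def
  set s₁ : ℝ := (φ - xh₃ - 2 * π * m) / ub₂ with hs₁_def
  have hnum : 0 ≤ φ - xh₃ - 2 * π * m := by
    have h := Int.floor_le ((φ - xh₃) / (2 * π))
    have h2 := mul_le_mul_of_nonneg_left h hπ.le
    rw [mul_div_cancel₀ _ hπ.ne'] at h2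
    linarith
  have hs₁0 : 0 ≤ s₁ := div_nonneg hnum hub₂.le
  set θ : ℝ := xh₃ + ub₂ * s₁ with hθ_def
  have hθφ : θ = φ - m * (2 * π) := by
    rw [hθ_def, hs₁_def, mul_div_cancel₀ _ hub₂.ne']; ring
  have hcosθ : Real.cos θ = Real.cos φ := by
    rw [hθφ, Real.cos_sub_int_mul_two_pi]
  have hsinθ : Real.sin θ = Real.sin φ := by
    rw [hθφ, Real.sin_sub_int_mul_two_pi]
  set s₂ : ℝ := s₁ + r / ub₁ with hs₂_def
  have hs₁s₂ : s₁ ≤ s₂ := by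
    have h : 0 ≤ r / ub₁ := div_nonneg hr0 hub₁.le
    rw [hs₂_def]; linarith
  set n : ℤ := ⌈θ / (2 * π)⌉ with hn_def
  set T : ℝ := s₂ + (2 * π * n - θ + 2 * π) / ub₂ with hT_def
  have hθn : θ ≤ 2 * π * n := by
    have h := Int.le_ceil (θ / (2 * π))
    have h2 := mul_le_mul_of_nonneg_left h hπ.le
    rw [mul_div_cancel₀ _ hπ.ne'] at h2
    linarith
  have hs₂T : s₂ < T := by
    have h : 0 < (2 * π * n - θ + 2 * π) / ub₂ := div_pos (by linarith) hub₂
    rw [hT_def]; linarith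
  have hT0 : 0 < T := lt_of_le_of_lt (hs₁0.trans hs₁s₂) hs₂T
  refine ⟨T, hT0, s₁, s₂, hs₁0, hs₁s₂, hs₂T.le, ?_⟩
  refine ⟨fun t => if t < s₁ then (0, ub₂) else if t < s₂ then (ub₁, 0) else (0, ub₂),
    fun t => xh₁ + ub₁ * Real.cos θ * max (min t s₂ - s₁) 0,
    fun t => xh₂ + ub₁ * Real.sin θ * max (min t s₂ - s₁) 0,
    fun t => xh₃ + ub₂ * min t s₁ + ub₂ * max (t - s₂) 0, ?_, ?_, ?_, ?_, ?_, ?_, ?_, ?_,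
    ?_, ?_, ?_, ?_, ?_, ?_⟩
  · intro t
    by_cases h1 : t < s₁ <;> by_cases h2 : t < s₂ <;> simp [h1, h2]
  · intro t ht; simp [ht.2]
  · intro t ht; simp [not_lt.mpr ht.1, ht.2]
  · intro t ht; simp [not_lt.mpr (hs₁s₂.trans ht.1), not_lt.mpr ht.1]
  · fun_prop
  · fun_prop
  · fun_prop
  · intro t ht hts₁ hts₂
    rcases lt_or_gt_of_ne hts₁ with hA | hB
    · -- t < s₁ : turning
      have hev : ∀ᶠ s in nhds t, s < s₁ := eventually_lt_nhds hA
      have hx₁ : (fun s => xh₁ + ub₁ * Real.cos θ * max (min s s₂ - s₁) 0)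
          =ᶠ[nhds t] fun _ => xh₁ := by
        filter_upwards [hev] with s hs
        rw [min_eq_left (hs.le.trans hs₁s₂), max_eq_right (by linarith), mul_zero, add_zero]
      have hx₂ : (fun s => xh₂ + ub₁ * Real.sin θ * max (min s s₂ - s₁) 0)
          =ᶠ[nhds t] fun _ => xh₂ := by
        filter_upwards [hev] with s hs
        rw [min_eq_left (hs.le.trans hs₁s₂), max_eq_right (by linarith), mul_zero, add_zero]
      have hx₃ : (fun s => xh₃ + ub₂ * min s s₁ + ub₂ * max (s - s₂) 0)
          =ᶠ[nhds t] fun s => xh₃ + ub₂ * s := by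
        filter_upwards [hev] with s hs
        rw [min_eq_left hs.le, max_eq_right (by linarith [hs₁s₂] : s - s₂ ≤ 0), mul_zero,
          add_zero]
      simp only [if_pos hA]
      have hd₃ : HasDerivAt (fun s => xh₃ + ub₂ * s) ub₂ t := by
        simpa using ((hasDerivAt_id t).const_mul ub₂).const_add xh₃
      refine ⟨?_, ?_, hd₃.congr_of_eventuallyEq hx₃⟩
      · have := (hasDerivAt_const t xh₁).congr_of_eventuallyEq hx₁
        simpa using this
      · have := (hasDerivAt_const t xh₂).congr_of_eventuallyEq hx₂
        simpa using this
    · rcases lt_trichotomy t s₂ with hB2 | h | hC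
      · -- s₁ < t < s₂ : moving
        have hev : ∀ᶠ s in nhds t, s₁ < s ∧ s < s₂ :=
          (eventually_gt_nhds hB).and (eventually_lt_nhds hB2)
        have hθs : ∀ s, s₁ < s → s < s₂ →
            xh₃ + ub₂ * min s s₁ + ub₂ * max (s - s₂) 0 = θ := by
          intro s h1 h2
          rw [min_eq_right h1.le, max_eq_right (by linarith), mul_zero, add_zero, hθ_def]
        have hx₃ : (fun s => xh₃ + ub₂ * min s s₁ + ub₂ * max (s - s₂) 0)
            =ᶠ[nhds t] fun _ => θ := by
          filter_upwards [hev] with s hs; exact hθs s hs.1 hs.2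
        have hx₁ : (fun s => xh₁ + ub₁ * Real.cos θ * max (min s s₂ - s₁) 0)
            =ᶠ[nhds t] fun s => xh₁ + ub₁ * Real.cos θ * (s - s₁) := by
          filter_upwards [hev] with s hs
          rw [min_eq_left hs.2.le, max_eq_left (by linarith [hs.1])]
        have hx₂ : (fun s => xh₂ + ub₁ * Real.sin θ * max (min s s₂ - s₁) 0)
            =ᶠ[nhds t] fun s => xh₂ + ub₁ * Real.sin θ * (s - s₁) := by
          filter_upwards [hev] with s hs
          rw [min_eq_left hs.2.le, max_eq_left (by linarith [hs.1])]
        have hd₁ : HasDerivAt (fun s => xh₁ + ub₁ * Real.cos θ * (s - s₁))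
            (ub₁ * Real.cos θ) t := by
          simpa using (((hasDerivAt_id t).sub_const s₁).const_mul
            (ub₁ * Real.cos θ)).const_add xh₁
        have hd₂ : HasDerivAt (fun s => xh₂ + ub₁ * Real.sin θ * (s - s₁))
            (ub₁ * Real.sin θ) t := by
          simpa using (((hasDerivAt_id t).sub_const s₁).const_mul
            (ub₁ * Real.sin θ)).const_add xh₂
        simp only [if_neg (not_lt.mpr hB.le), if_pos hB2, hθs t hB hB2]
        exact ⟨by simpa [mul_assoc] using hd₁.congr_of_eventuallyEq hx₁,
          by simpa [mul_assoc] using hd₂.congr_of_eventuallyEq hx₂,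
          (hasDerivAt_const t θ).congr_of_eventuallyEq hx₃⟩
      · exact absurd h hts₂
      · -- s₂ < t : turning
        have hev : ∀ᶠ s in nhds t, s₂ < s := eventually_gt_nhds hC
        have hx₁ : (fun s => xh₁ + ub₁ * Real.cos θ * max (min s s₂ - s₁) 0)
            =ᶠ[nhds t] fun _ => xh₁ + ub₁ * Real.cos θ * max (s₂ - s₁) 0 := by
          filter_upwards [hev] with s hs; rw [min_eq_right hs.le]
        have hx₂ : (fun s => xh₂ + ub₁ * Real.sin θ * max (min s s₂ - s₁) 0)
            =ᶠ[nhds t] fun _ => xh₂ + ub₁ * Real.sin θ * max (s₂ - s₁) 0 := by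
          filter_upwards [hev] with s hs; rw [min_eq_right hs.le]
        have hx₃ : (fun s => xh₃ + ub₂ * min s s₁ + ub₂ * max (s - s₂) 0)
            =ᶠ[nhds t] fun s => xh₃ + ub₂ * s₁ + ub₂ * (s - s₂) := by
          filter_upwards [hev] with s hs
          rw [min_eq_right (hs₁s₂.trans hs.le), max_eq_left (by linarith)]
        have hd₃ : HasDerivAt (fun s => xh₃ + ub₂ * s₁ + ub₂ * (s - s₂)) ub₂ t := by
          simpa using (((hasDerivAt_id t).sub_const s₂).const_mul ub₂).const_add
            (xh₃ + ub₂ * s₁)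
        simp only [if_neg (not_lt.mpr (hs₁s₂.trans hC.le)), if_neg (not_lt.mpr hC.le)]
        exact ⟨by simpa using (hasDerivAt_const t _).congr_of_eventuallyEq hx₁,
          by simpa using (hasDerivAt_const t _).congr_of_eventuallyEq hx₂,
          hd₃.congr_of_eventuallyEq hx₃⟩
  · beta_reduce
    rw [min_eq_left (hs₁0.trans hs₁s₂), max_eq_right (by linarith), mul_zero, add_zero]
  · beta_reduce
    rw [min_eq_left (hs₁0.trans hs₁s₂), max_eq_right (by linarith), mul_zero, add_zero]
  · beta_reduce
    rw [min_eq_left hs₁0, max_eq_right (by linarith [hs₁0.trans (hs₁s₂.trans hs₂T.le)]),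
      ]
    ring
  · beta_reduce
    rw [min_eq_right hs₂T.le, max_eq_left (by linarith)]
    have h : ub₁ * Real.cos θ * (s₂ - s₁) = r * Real.cos φ := by
      rw [hcosθ, hs₂_def]; field_simp; ring
    rw [h, hcos]; ring
  · beta_reduce
    rw [min_eq_right hs₂T.le, max_eq_left (by linarith)]
    have h : ub₁ * Real.sin θ * (s₂ - s₁) = r * Real.sin φ := by
      rw [hsinθ, hs₂_def]; field_simp; ring
    rw [h, hsin]; ring
  · refine ⟨n + 1, ?_⟩
    beta_reduce
    rw [min_eq_right (hs₁s₂.trans hs₂T.le), max_eq_left (by linarith)]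
    have h : ub₂ * (T - s₂) = 2 * π * n - θ + 2 * π := by
      rw [hT_def]; field_simp; ring
    rw [h]
    push_cast
    rw [hθ_def]; ring
end
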